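/- Let α be an irrational real number and let x_N := {Nα} be the fractional part of Nα, so (x_N)_{N∈ℕ} is the Kronecker sequence in [0,1). Then for every continuous non-decreasing function f : [0,∞) → [0,∞), the sequence (x_N) does not have f-pair correlations. -/

import Mathlib

open Filter Set Asymptotics

/-- `nid x` is the distance from `x` to the nearest integer. -/
noncomputable def nid (x : ℝ) : ℝ := |x - round x|

/-- `pairCount x s N` is the pair counting function
`R(s,N) = #{(i,j) : 1 ≤ i ≠ j ≤ N, ‖x i - x j‖ ≤ s/N}`. -/
noncomputable def pairCount (x : ℕ → ℝ) (s : ℝ) (N : ℕ) : ℕ :=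
  {p : ℕ × ℕ | 1 ≤ p.1 ∧ p.1 ≤ N ∧ 1 ≤ p.2 ∧ p.2 ≤ N ∧ p.1 ≠ p.2 ∧
      nid (x p.1 - x p.2) ≤ s / N}.ncard

/-- The sequence `x` has `f`-pair correlations:
`R(s,N)/N → f s` for every `s ≥ 0`. -/
def HasPairCorr (x : ℕ → ℝ) (f : ℝ → ℝ) : Prop :=
  ∀ s : ℝ, 0 ≤ s →
    Tendsto (fun N : ℕ => (pairCount x s N : ℝ) / N) atTop (nhds (f s))

lemma nid_nonneg (x : ℝ) : 0 ≤ nid x := abs_nonneg _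

lemma nid_le (x : ℝ) (z : ℤ) : nid x ≤ |x - z| := by
  rcases eq_or_ne z (round x) with h | h
  · rw [nid, h]
  · have h1 : |x - round x| ≤ 1/2 := abs_sub_round x
    have h2 : (1:ℝ) ≤ |(z:ℝ) - round x| := by
      have : z - round x ≠ 0 := sub_ne_zero.2 h
      calc (1:ℝ) = ((1:ℤ):ℝ) := by norm_num
      _ ≤ |((z - round x : ℤ):ℝ)| := by
          rw [← Int.cast_abs]; exact_mod_cast Int.one_le_abs this
      _ = |(z:ℝ) - round x| := by push_cast; ring_nf
    have h3 : |(z:ℝ) - round x| ≤ |x - round x| + |x - z| := by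
      have he : (z:ℝ) - round x = (x - round x) + -(x - z) := by ring
      rw [he]
      exact (abs_add_le _ _).trans (by rw [abs_neg])
    rw [nid]; linarith
  
lemma nid_add_int (x : ℝ) (z : ℤ) : nid (x + z) = nid x := by
  rw [nid, round_add_intCast, nid]; push_cast; ring_nf

lemma nid_neg (x : ℝ) : nid (-x) = nid x := by
  have h : ∀ y : ℝ, nid (-y) ≤ nid y := by
    intro y
    calc nid (-y) ≤ |(-y) - ((-round y : ℤ):ℝ)| := nid_le _ _
    _ = |y - round y| := by push_cast; rw [← abs_neg]; ring_nf
    _ = nid y := rfl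
  refine le_antisymm (h x) ?_
  simpa using h (-x)

lemma nid_pos {y : ℝ} (hy : Irrational y) : 0 < nid y := by
  rw [nid, abs_pos, sub_ne_zero]
  exact hy.ne_int _



lemma pairCount_eq_zero (x : ℕ → ℝ) (s : ℝ) (N : ℕ)
    (h : ∀ i j, 1 ≤ i → i ≤ N → 1 ≤ j → j ≤ N → i ≠ j → ¬ (nid (x i - x j) ≤ s / N)) :
    pairCount x s N = 0 := by
  rw [pairCount]
  convert Set.ncard_empty (ℕ × ℕ)
  ext p
  simp only [Set.mem_setOf_eq, Set.mem_empty_iff_false, iff_false]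
  rintro ⟨h1, h2, h3, h4, h5, h6⟩
  exact h p.1 p.2 h1 h2 h3 h4 h5 h6

lemma le_pairCount (x : ℕ → ℝ) (s : ℝ) (N d : ℕ) (hd1 : 1 ≤ d) (hdN : d < N)
    (h : ∀ i, 1 ≤ i → i + d ≤ N → nid (x i - x (i + d)) ≤ s / N) :
    2 * (N - d) ≤ pairCount x s N := by
  classical
  set S := {p : ℕ × ℕ | 1 ≤ p.1 ∧ p.1 ≤ N ∧ 1 ≤ p.2 ∧ p.2 ≤ N ∧ p.1 ≠ p.2 ∧
      nid (x p.1 - x p.2) ≤ s / N} with hS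
  have hSfin : S.Finite := by
    apply Set.Finite.subset (Set.finite_Icc (1,1) (N,N))
    rintro ⟨i, j⟩ ⟨h1, h2, h3, h4, -, -⟩
    exact ⟨⟨h1, h3⟩, ⟨h2, h4⟩⟩
  set A := (fun i => (i, i + d)) '' Set.Icc 1 (N - d) with hA
  set B := (fun i => (i + d, i)) '' Set.Icc 1 (N - d) with hB
  have hIcc : (Set.Icc 1 (N - d)).ncard = N - d := by
    rw [← Finset.coe_Icc, Set.ncard_coe_finset, Nat.card_Icc]; omega
  have hAcard : A.ncard = N - d := by
    rw [hA, Set.ncard_image_of_injective _ (fun a b hab => by simpa using hab), hIcc]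
  have hBcard : B.ncard = N - d := by
    rw [hB, Set.ncard_image_of_injective _ (fun a b hab => by simpa [Prod.ext_iff] using hab),
      hIcc]
  have hmemA : A ⊆ S := by
    rintro ⟨i, j⟩ ⟨a, ⟨ha1, ha2⟩, heq⟩
    simp only [Prod.mk.injEq] at heq
    obtain ⟨rfl, rfl⟩ := heq
    have hle : a + d ≤ N := by omega
    exact ⟨ha1, by omega, by omega, hle, by omega, h a ha1 hle⟩
  have hmemB : B ⊆ S := by
    rintro ⟨i, j⟩ ⟨a, ⟨ha1, ha2⟩, heq⟩
    simp only [Prod.mk.injEq] at heq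
    obtain ⟨rfl, rfl⟩ := heq
    have hle : a + d ≤ N := by omega
    have : nid (x (a + d) - x a) ≤ s / N := by
      rw [← nid_neg, neg_sub]; exact h a ha1 hle
    exact ⟨by omega, hle, ha1, by omega, by omega, this⟩
  have hdisj : Disjoint A B := by
    rw [Set.disjoint_left]
    rintro ⟨i, j⟩ ⟨a, ⟨ha1, -⟩, ha⟩ ⟨b, ⟨hb1, -⟩, hb⟩
    simp only [Prod.mk.injEq] at ha hb
    omega
  have hABfin : A.Finite := hSfin.subset hmemA
  have hBfin : B.Finite := hSfin.subset hmemB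
  have hunion : (A ∪ B).ncard = 2 * (N - d) := by
    rw [Set.ncard_union_eq hdisj hABfin hBfin, hAcard, hBcard]; ring
  calc 2 * (N - d) = (A ∪ B).ncard := hunion.symm
  _ ≤ S.ncard := Set.ncard_le_ncard (Set.union_subset hmemA hmemB) hSfin
  _ = pairCount x s N := rfl

lemma irr_nat_mul {α : ℝ} (hα : Irrational α) {d : ℕ} (hd : 1 ≤ d) :
    Irrational ((d : ℝ) * α) := hα.natCast_mul (by omega)

lemma exists_next_record (α : ℝ) (hα : Irrational α) (q : ℕ) (hq : 1 ≤ q) :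
    ∃ q' : ℕ, q < q' ∧ ∀ d : ℕ, 1 ≤ d → d ≤ q → nid (q' * α) < nid (d * α) := by
  have hne : (Finset.Icc 1 q).Nonempty := ⟨1, by simp [hq]⟩
  set m := (Finset.Icc 1 q).inf' hne (fun d => nid (d * α)) with hm
  have hmle : ∀ d : ℕ, 1 ≤ d → d ≤ q → m ≤ nid (d * α) := by
    intro d h1 h2
    exact Finset.inf'_le _ (Finset.mem_Icc.2 ⟨h1, h2⟩)
  have hmpos : 0 < m := by
    rw [hm, Finset.lt_inf'_iff]
    intro d hd
    rw [Finset.mem_Icc] at hd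
    exact nid_pos (irr_nat_mul hα hd.1)
  obtain ⟨n, hn⟩ := exists_nat_gt (max (q : ℝ) (1 / m))
  have hnq : (q : ℝ) < n := lt_of_le_of_lt (le_max_left _ _) hn
  have hnm : 1 / m < n := lt_of_le_of_lt (le_max_right _ _) hn
  have hn1 : 0 < n := by by_contra hc; push_neg at hc; interval_cases n; exact absurd hnq (by simp)
  obtain ⟨j, k, hk0, hkn, hjk⟩ := Real.exists_int_int_abs_mul_sub_le α hn1
  set k' := k.toNat with hk'
  have hk'k : (k' : ℤ) = k := Int.toNat_of_nonneg (le_of_lt hk0)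
  have hk'1 : 1 ≤ k' := by omega
  have hnidk : nid (k' * α) ≤ 1 / (n + 1) := by
    refine le_trans (nid_le _ j) ?_
    have : ((k' : ℕ) : ℝ) = (k : ℝ) := by exact_mod_cast hk'k
    rw [this]; exact hjk
  have hlt : 1 / ((n : ℝ) + 1) < m := by
    rw [div_lt_iff₀ (by positivity)]
    rw [div_lt_iff₀ hmpos] at hnm
    nlinarith
  have hk'q : q < k' := by
    by_contra hcon
    push_neg at hcon
    exact absurd (lt_of_le_of_lt hnidk hlt) (not_lt.2 (hmle k' hk'1 hcon))
  exact ⟨k', hk'q, fun d h1 h2 =>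
    lt_of_lt_of_le (lt_of_le_of_lt hnidk hlt) (hmle d h1 h2)⟩

noncomputable def nextRec (α : ℝ) (hα : Irrational α) (q : ℕ) (hq : 1 ≤ q) : ℕ :=
  Nat.find (exists_next_record α hα q hq)

lemma nextRec_gt (α : ℝ) (hα : Irrational α) (q : ℕ) (hq : 1 ≤ q) :
    q < nextRec α hα q hq := (Nat.find_spec (exists_next_record α hα q hq)).1

lemma nextRec_lt (α : ℝ) (hα : Irrational α) (q : ℕ) (hq : 1 ≤ q) :
    ∀ d : ℕ, 1 ≤ d → d ≤ q → nid (nextRec α hα q hq * α) < nid (d * α) :=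
  (Nat.find_spec (exists_next_record α hα q hq)).2

lemma nextRec_min (α : ℝ) (hα : Irrational α) (q : ℕ) (hq : 1 ≤ q) (e : ℕ)
    (he : q < e) (he' : e < nextRec α hα q hq) :
    ∃ d : ℕ, 1 ≤ d ∧ d ≤ q ∧ nid (d * α) ≤ nid (e * α) := by
  have := Nat.find_min (exists_next_record α hα q hq) he'
  push_neg at this
  obtain ⟨d, h1, h2, h3⟩ := this he
  exact ⟨d, h1, h2, h3⟩

noncomputable def recQ (α : ℝ) (hα : Irrational α) : ℕ → {q : ℕ // 1 ≤ q}
  | 0 => ⟨1, le_rfl⟩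
  | l + 1 =>
    ⟨nextRec α hα (recQ α hα l).1 (recQ α hα l).2,
      le_trans (recQ α hα l).2 (le_of_lt (nextRec_gt α hα _ _))⟩

section Records

variable (α : ℝ) (hα : Irrational α)

noncomputable def rQ (l : ℕ) : ℕ := (recQ α hα l).1

lemma rQ_one_le (l : ℕ) : 1 ≤ rQ α hα l := (recQ α hα l).2

lemma rQ_zero : rQ α hα 0 = 1 := rfl

lemma rQ_succ_lt (l : ℕ) : rQ α hα l < rQ α hα (l + 1) := nextRec_gt α hα _ (recQ α hα l).2

lemma rQ_mono : StrictMono (rQ α hα) := strictMono_nat_of_lt_succ (rQ_succ_lt α hα)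

lemma rQ_le_self (l : ℕ) : l + 1 ≤ rQ α hα l := by
  induction l with
  | zero => simp [rQ_zero]
  | succ n ih => have := rQ_succ_lt α hα n; omega

lemma rQ_min' (l : ℕ) (d : ℕ) (h1 : 1 ≤ d) (h2 : d < rQ α hα (l + 1)) :
    nid (rQ α hα (l + 1) * α) < nid (d * α) := by
  rcases le_or_gt d (rQ α hα l) with h | h
  · exact nextRec_lt α hα _ (recQ α hα l).2 d h1 h
  · obtain ⟨d', hd1, hd2, hd3⟩ := nextRec_min α hα _ (rQ_one_le α hα l) d h h2
    exact lt_of_lt_of_le (nextRec_lt α hα _ (recQ α hα l).2 d' hd1 hd2) hd3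

lemma rQ_min (l : ℕ) (d : ℕ) (h1 : 1 ≤ d) (h2 : d < rQ α hα (l + 1)) :
    nid (rQ α hα l * α) ≤ nid (d * α) := by
  have aux : ∀ e : ℕ, 1 ≤ e → e ≤ rQ α hα l → nid (rQ α hα l * α) ≤ nid (e * α) := by
    intro e he1 he2
    rcases eq_or_lt_of_le he2 with rfl | hlt
    · exact le_rfl
    · cases l with
      | zero => rw [rQ_zero] at hlt; omega
      | succ n => exact le_of_lt (rQ_min' α hα n e he1 hlt)
  rcases le_or_gt d (rQ α hα l) with h | h
  · exact aux d h1 h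
  · obtain ⟨d', hd1, hd2, hd3⟩ := nextRec_min α hα _ (rQ_one_le α hα l) d h h2
    exact le_trans (aux d' hd1 hd2) hd3

lemma rQ_delta_lt (l : ℕ) : nid (rQ α hα (l + 1) * α) < nid (rQ α hα l * α) :=
  nextRec_lt α hα _ (recQ α hα l).2 _ (rQ_one_le α hα l) le_rfl

lemma rQ_delta_pos (l : ℕ) : 0 < nid (rQ α hα l * α) :=
  nid_pos (irr_nat_mul hα (rQ_one_le α hα l))

end Records

section NT

variable (α : ℝ) (hα : Irrational α)

noncomputable def rB (l : ℕ) : ℝ :=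
  (rQ α hα l : ℝ) * α - round ((rQ α hα l : ℝ) * α)

lemma rB_abs (l : ℕ) : |rB α hα l| = nid (rQ α hα l * α) := rfl

lemma rB_ne (l : ℕ) : rB α hα l ≠ 0 := by
  intro h
  have := rQ_delta_pos α hα l
  rw [← rB_abs, h] at this
  simp at this

/-- Dirichlet: `δ l ≤ 1 / q (l+1)`. -/
lemma delta_le (l : ℕ) : nid (rQ α hα l * α) ≤ 1 / (rQ α hα (l + 1) : ℝ) := by
  set q' := rQ α hα (l + 1) with hq'
  have hq'2 : 2 ≤ q' := by
    have h1 := rQ_succ_lt α hα l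
    have h2 := rQ_one_le α hα l
    omega
  have hn1 : 0 < q' - 1 := by omega
  obtain ⟨j, k, hk0, hkn, hjk⟩ := Real.exists_int_int_abs_mul_sub_le α hn1
  set k' := k.toNat with hk'
  have hk'k : (k' : ℤ) = k := Int.toNat_of_nonneg (le_of_lt hk0)
  have hk'1 : 1 ≤ k' := by omega
  have hk'lt : k' < q' := by omega
  have hcast : ((q' - 1 : ℕ) : ℝ) + 1 = (q' : ℝ) := by
    push_cast [Nat.cast_sub (by omega : 1 ≤ q')]; ring
  have hnidk : nid (k' * α) ≤ 1 / (q' : ℝ) := by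
    refine le_trans (nid_le _ j) ?_
    have hc : ((k' : ℕ) : ℝ) = (k : ℝ) := by exact_mod_cast hk'k
    rw [hc, ← hcast]
    exact hjk
  exact le_trans (rQ_min α hα l k' hk'1 hk'lt) hnidk

/-- Sign alternation. -/
lemma rB_alt (l : ℕ) : rB α hα l * rB α hα (l + 1) < 0 := by
  rcases lt_trichotomy (rB α hα l * rB α hα (l + 1)) 0 with h | h | h
  · exact h
  · exact absurd (mul_eq_zero.1 h) (by push_neg; exact ⟨rB_ne α hα l, rB_ne α hα (l + 1)⟩)
  exfalso
  set b := rB α hα l with hb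
  set b' := rB α hα (l + 1) with hb'
  have hδ : |b'| < |b| := by rw [rB_abs, rB_abs]; exact rQ_delta_lt α hα l
  -- the difference gives a small nid at d = q' - q
  set d : ℕ := rQ α hα (l + 1) - rQ α hα l with hd
  have hd1 : 1 ≤ d := by have := rQ_succ_lt α hα l; omega
  have hdlt : d < rQ α hα (l + 1) := by have := rQ_one_le α hα l; omega
  have hcast : (d : ℝ) = (rQ α hα (l + 1) : ℝ) - rQ α hα l := by
    rw [hd]; push_cast [Nat.cast_sub (le_of_lt (rQ_succ_lt α hα l))]; ring
  have hnid : nid (d * α) ≤ |b' - b| := by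
    refine le_trans (nid_le _ (round ((rQ α hα (l+1) : ℝ) * α) - round ((rQ α hα l : ℝ) * α))) ?_
    rw [hcast]
    apply le_of_eq
    congr 1
    rw [hb, hb', rB, rB]
    push_cast
    ring
  have habs : |b' - b| < |b| := by
    rcases lt_or_gt_of_ne (rB_ne α hα l) with hneg | hpos
    · -- b < 0, so b' < 0
      have hb'neg : b' < 0 := by nlinarith
      rw [abs_of_neg hneg, abs_of_neg hb'neg] at hδ
      rw [abs_of_neg hneg]
      rw [abs_lt]
      constructor <;> nlinarith
    · have hb'pos : 0 < b' := by nlinarith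
      rw [abs_of_pos hpos, abs_of_pos hb'pos] at hδ
      rw [abs_of_pos hpos, abs_lt]
      constructor <;> nlinarith
  have := rQ_min α hα l d hd1 hdlt
  rw [← rB_abs] at this
  exact absurd (lt_of_le_of_lt hnid habs) (not_lt.2 this)

/-- The fundamental identity `q_{l+1} δ_l + q_l δ_{l+1} = 1`. -/
lemma rQ_identity (l : ℕ) :
    (rQ α hα (l + 1) : ℝ) * nid (rQ α hα l * α)
      + (rQ α hα l : ℝ) * nid (rQ α hα (l + 1) * α) = 1 := by
  set q : ℕ := rQ α hα l with hq
  set q' : ℕ := rQ α hα (l + 1) with hq'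
  set b := rB α hα l with hb
  set b' := rB α hα (l + 1) with hb'
  set P : ℤ := round ((q : ℝ) * α) with hP
  set P' : ℤ := round ((q' : ℝ) * α) with hP'
  set D : ℤ := P' * q - P * q' with hD
  have hDr : (D : ℝ) = (q' : ℝ) * b - (q : ℝ) * b' := by
    rw [hD, hb, hb', rB, rB, ← hq, ← hq', ← hP, ← hP']
    push_cast
    ring
  have halt : b * b' < 0 := rB_alt α hα l
  have habsD : |(D : ℝ)| = (q' : ℝ) * |b| + (q : ℝ) * |b'| := by
    have hqpos : (0:ℝ) < q := by exact_mod_cast rQ_one_le α hα l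
    have hq'pos : (0:ℝ) < q' := by
      have := rQ_one_le α hα (l + 1); exact_mod_cast this
    rcases lt_or_gt_of_ne (rB_ne α hα l) with hneg | hpos
    · have hb'pos : 0 < b' := by nlinarith
      rw [hDr, abs_of_neg hneg, abs_of_pos hb'pos, abs_of_neg (by nlinarith)]
      ring
    · have hb'neg : b' < 0 := by nlinarith
      rw [hDr, abs_of_pos hpos, abs_of_neg hb'neg, abs_of_pos (by nlinarith)]
      ring
  have h1 : (q' : ℝ) * |b| ≤ 1 := by
    rw [rB_abs]
    have := delta_le α hα l
    rw [← hq'] at this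
    have hq'pos : (0:ℝ) < q' := by
      have := rQ_one_le α hα (l + 1); exact_mod_cast this
    calc (q' : ℝ) * nid (q * α) ≤ (q' : ℝ) * (1 / q') := by
          apply mul_le_mul_of_nonneg_left this (le_of_lt hq'pos)
    _ = 1 := by field_simp
  have h2 : (q : ℝ) * |b'| < 1 := by
    rw [rB_abs]
    have hlt := rQ_delta_lt α hα l
    have hle := delta_le α hα l
    rw [← hq'] at hle
    have hqq' : (q : ℝ) < q' := by exact_mod_cast rQ_succ_lt α hα l
    have hq'pos : (0:ℝ) < q' := by
      have := rQ_one_le α hα (l + 1); exact_mod_cast this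
    have hqpos : (0:ℝ) < q := by exact_mod_cast rQ_one_le α hα l
    calc (q : ℝ) * nid (q' * α) < (q : ℝ) * nid (q * α) := by
          apply mul_lt_mul_of_pos_left hlt hqpos
    _ ≤ (q : ℝ) * (1 / q') := mul_le_mul_of_nonneg_left hle (le_of_lt hqpos)
    _ < q' * (1 / q') := by
          apply mul_lt_mul_of_pos_right hqq' (by positivity)
    _ = 1 := by field_simp
  have hpos : 0 < (q' : ℝ) * |b| + (q : ℝ) * |b'| := by
    have hq'pos : (0:ℝ) < q' := by
      have := rQ_one_le α hα (l + 1); exact_mod_cast this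
    have h3 : 0 < |b| := abs_pos.2 (rB_ne α hα l)
    have h4 : 0 ≤ (q:ℝ) * |b'| := by positivity
    nlinarith
  have hD1 : |D| = 1 := by
    have hne : D ≠ 0 := by
      intro h
      rw [h] at habsD
      simp at habsD
      nlinarith
    have hlow : 1 ≤ |D| := Int.one_le_abs hne
    have hhigh : |D| < 2 := by
      have : |(D:ℝ)| < 2 := by rw [habsD]; linarith
      exact_mod_cast (by rwa [← Int.cast_abs] at this : ((|D| : ℤ) : ℝ) < 2)
    omega
  have : |(D : ℝ)| = 1 := by rw [← Int.cast_abs, hD1]; norm_num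
  rw [habsD] at this
  have e1 : nid ((q : ℝ) * α) = |b| := rfl
  have e2 : nid ((q' : ℝ) * α) = |b'| := rfl
  rw [e1, e2]
  linarith

end NT

section NT2

variable (α : ℝ) (hα : Irrational α)

lemma rQ_fib (l : ℕ) : rQ α hα (l + 1) + rQ α hα (l + 2) ≤ rQ α hα (l + 3) := by
  by_contra hcon
  push_neg at hcon
  set q1 : ℕ := rQ α hα (l + 1) with hq1
  set q2 : ℕ := rQ α hα (l + 2) with hq2
  set q3 : ℕ := rQ α hα (l + 3) with hq3
  have h12 : q1 < q2 := rQ_succ_lt α hα (l + 1)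
  have h23 : q2 < q3 := rQ_succ_lt α hα (l + 2)
  set d : ℕ := q1 + q2 - q3 with hd
  have hd1 : 1 ≤ d := by omega
  have hdlt : d < q1 := by omega
  have hdlt' : d < rQ α hα (l + 1) := hdlt
  set b1 := rB α hα (l + 1) with hb1
  set b2 := rB α hα (l + 2) with hb2
  set b3 := rB α hα (l + 3) with hb3
  have halt1 : b1 * b2 < 0 := rB_alt α hα (l + 1)
  have halt2 : b2 * b3 < 0 := rB_alt α hα (l + 2)
  have hδ0 : |b1| < nid (rQ α hα l * α) := rQ_delta_lt α hα l
  have hδ1 : |b2| < |b1| := rQ_delta_lt α hα (l + 1)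
  have hδ2 : |b3| < |b2| := rQ_delta_lt α hα (l + 2)
  have hb2ne := rB_ne α hα (l + 2)
  have hb1ne := rB_ne α hα (l + 1)
  have hb3ne := rB_ne α hα (l + 3)
  have hcast : (d : ℝ) = (q1 : ℝ) + q2 - q3 := by
    rw [hd]; push_cast [Nat.cast_sub (by omega : q3 ≤ q1 + q2)]; ring
  set P1 : ℤ := round ((q1 : ℝ) * α)
  set P2 : ℤ := round ((q2 : ℝ) * α)
  set P3 : ℤ := round ((q3 : ℝ) * α)
  have hnid : nid (d * α) ≤ |b1 + b2 - b3| := by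
    refine le_trans (nid_le _ (P1 + P2 - P3)) ?_
    apply le_of_eq
    congr 1
    rw [hcast, hb1, hb2, hb3, rB, rB, rB, ← hq1, ← hq2, ← hq3]
    push_cast
    ring
  have habs : |b1 + b2 - b3| < nid (rQ α hα l * α) := by
    rcases lt_or_gt_of_ne hb1ne with hneg | hpos
    · have h2pos : 0 < b2 := by nlinarith
      have h3neg : b3 < 0 := by nlinarith
      rw [abs_of_neg hneg] at hδ1 hδ0
      rw [abs_of_pos h2pos] at hδ1 hδ2
      rw [abs_of_neg h3neg] at hδ2
      rw [abs_lt]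
      constructor <;> nlinarith
    · have h2neg : b2 < 0 := by nlinarith
      have h3pos : 0 < b3 := by nlinarith
      rw [abs_of_pos hpos] at hδ1 hδ0
      rw [abs_of_neg h2neg] at hδ1 hδ2
      rw [abs_of_pos h3pos] at hδ2
      rw [abs_lt]
      constructor <;> nlinarith
  have hmin := rQ_min α hα l d hd1 hdlt'
  exact absurd (lt_of_le_of_lt hnid habs) (not_lt.2 hmin)

end NT2

lemma nid_x_sub (α : ℝ) (x : ℕ → ℝ) (hx : ∀ N : ℕ, x N = Int.fract (N * α))
    (i j : ℕ) (h : j ≤ i) :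
    nid (x i - x j) = nid (((i - j : ℕ) : ℝ) * α) := by
  rw [hx i, hx j, Int.fract, Int.fract]
  have he : (i : ℝ) * α - ↑⌊(i : ℝ) * α⌋ - ((j : ℝ) * α - ↑⌊(j : ℝ) * α⌋)
      = ((i - j : ℕ) : ℝ) * α + ((⌊(j : ℝ) * α⌋ - ⌊(i : ℝ) * α⌋ : ℤ) : ℝ) := by
    push_cast [Nat.cast_sub h]
    ring
  rw [he, nid_add_int]

/-- For irrational `α`, the Kronecker sequence `x N = {N α}` does not
have `f`-pair correlations for any continuous non-decreasing `f : [0,∞) → [0,∞)`. -/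
theorem statement11 (α : ℝ) (hα : Irrational α)
    (x : ℕ → ℝ) (hx : ∀ N : ℕ, x N = Int.fract (N * α)) :
    ∀ f : ℝ → ℝ, (∀ s : ℝ, 0 ≤ s → 0 ≤ f s) →
      ContinuousOn f (Ici 0) → MonotoneOn f (Ici 0) →
      ¬ HasPairCorr x f := by
  intro f _ _ _ hcorr
  set Q : ℕ → ℕ := rQ α hα with hQ
  set δ : ℕ → ℝ := fun l => nid ((Q l : ℝ) * α) with hδ
  set w : ℕ → ℝ := fun l => (Q (l + 1) : ℝ) * δ l with hw
  set u : ℕ → ℝ := fun l => (Q l : ℝ) * δ l with hu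
  have hδpos : ∀ l, 0 < δ l := fun l => rQ_delta_pos α hα l
  have hQpos : ∀ l, (0:ℝ) < Q l := fun l => by exact_mod_cast rQ_one_le α hα l
  have hid : ∀ l, (Q (l + 1) : ℝ) * δ l + (Q l : ℝ) * δ (l + 1) = 1 :=
    fun l => rQ_identity α hα l
  have hw_le_one : ∀ l, w l ≤ 1 := by
    intro l
    have h1 := hid l
    have h2 : 0 ≤ (Q l : ℝ) * δ (l + 1) := mul_nonneg (hQpos l).le (hδpos (l+1)).le
    simp only [hw]
    linarith
  have hw_nonneg : ∀ l, 0 ≤ w l := by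
    intro l
    simp only [hw]
    exact mul_nonneg (hQpos (l + 1)).le (hδpos l).le
  have hw_half : ∀ l, 1 / 2 < w (l + 1) := by
    intro l
    have h1 := hid (l + 1)
    -- w (l+1) = 1 - Q(l+1) * δ(l+2); bound Q(l+1) * δ(l+2) < 1/2
    have h2 : δ (l + 2) ≤ 1 / (Q (l + 3) : ℝ) := delta_le α hα (l + 2)
    have h3 : Q (l + 1) + Q (l + 2) ≤ Q (l + 3) := rQ_fib α hα l
    have h4 : Q (l + 1) < Q (l + 2) := rQ_succ_lt α hα (l + 1)
    have h5 : (2 * (Q (l + 1) : ℝ)) + 1 ≤ (Q (l + 3) : ℝ) := by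
      have : 2 * Q (l + 1) + 1 ≤ Q (l + 3) := by omega
      exact_mod_cast this
    have h6 : (Q (l + 1) : ℝ) * δ (l + 2) < 1 / 2 := by
      have hq3 : (0:ℝ) < Q (l + 3) := hQpos (l + 3)
      have : (Q (l + 1) : ℝ) * δ (l + 2) ≤ (Q (l + 1) : ℝ) / Q (l + 3) := by
        rw [div_eq_mul_one_div]
        exact mul_le_mul_of_nonneg_left h2 (le_of_lt (hQpos (l + 1)))
      have h7 : (Q (l + 1) : ℝ) / Q (l + 3) < 1 / 2 := by
        rw [div_lt_div_iff₀ hq3 (by norm_num)]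
        linarith [hQpos (l + 1)]
      linarith
    simp only [hw]
    linarith [hid (l + 1)]
  -- liminf of w
  have hbdd_le : Filter.IsBoundedUnder (· ≤ ·) atTop w :=
    Filter.isBoundedUnder_of ⟨1, hw_le_one⟩
  have hbdd_ge : Filter.IsBoundedUnder (· ≥ ·) atTop w :=
    Filter.isBoundedUnder_of ⟨0, hw_nonneg⟩
  have hcob_ge : Filter.IsCoboundedUnder (· ≥ ·) atTop w :=
    hbdd_le.isCoboundedUnder_ge
  set c : ℝ := Filter.liminf w atTop with hc
  have hc_half : 1 / 2 ≤ c := by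
    refine Filter.le_liminf_of_le hcob_ge ?_
    rw [eventually_atTop]
    refine ⟨1, fun l hl => ?_⟩
    obtain ⟨m, rfl⟩ : ∃ m, l = m + 1 := ⟨l - 1, by omega⟩
    exact le_of_lt (hw_half m)
  set s : ℝ := c - 1 / 20 with hs
  have hs45 : 9 / 20 ≤ s := by rw [hs]; linarith
  have hs_nonneg : 0 ≤ s := le_trans (by norm_num : (0:ℝ) ≤ 9/20) hs45
  -- Part 1 : f s = 0
  have hz : ∃ᶠ N in atTop, (fun N : ℕ => (pairCount x s N : ℝ) / N) N ∈ ({0} : Set ℝ) := by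
    have hev : ∀ᶠ l in atTop, s < w l :=
      Filter.eventually_lt_of_lt_liminf (by rw [hs]; linarith) hbdd_ge
    rw [eventually_atTop] at hev
    obtain ⟨L, hL⟩ := hev
    rw [Filter.frequently_atTop]
    intro M
    set l := max L M with hl
    refine ⟨Q (l + 1), ?_, ?_⟩
    · have := rQ_le_self α hα (l + 1)
      simp only [hQ]
      omega
    · have hcount : pairCount x s (Q (l + 1)) = 0 := by
        apply pairCount_eq_zero
        intro i j hi1 hiN hj1 hjN hij
        -- reduce to d = |i - j|
        have key : ∀ a b : ℕ, 1 ≤ b → b < a → a ≤ Q (l + 1) →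
            ¬ (nid (x a - x b) ≤ s / (Q (l + 1) : ℝ)) := by
          intro a b hb1 hba haN
          rw [nid_x_sub α x hx a b (le_of_lt hba)]
          have hd1 : 1 ≤ a - b := by omega
          have hdN : a - b < Q (l + 1) := by omega
          have hmin : δ l ≤ nid (((a - b : ℕ) : ℝ) * α) := rQ_min α hα l _ hd1 hdN
          have hwl : s < w l := hL l (le_max_left _ _)
          have hQp := hQpos (l + 1)
          push_neg
          calc s / (Q (l + 1) : ℝ) < δ l := by
                rw [div_lt_iff₀ hQp]
                simp only [hw] at hwl
                linarith
          _ ≤ _ := hmin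
        rcases lt_or_gt_of_ne hij with h | h
        · rw [← nid_neg, neg_sub]
          exact key j i hi1 h hjN
        · exact key i j hj1 h hiN
      simp only [Set.mem_singleton_iff, hcount]
      simp
  have hfs0 : f s = 0 := by
    have := (isClosed_singleton (x := (0:ℝ))).mem_of_frequently_of_tendsto hz
      (hcorr s hs_nonneg)
    simpa using this
  -- Part 2 : frequently u l small
  have hkey : ∃ᶠ l in atTop, u l ≤ s * (100 / 101) := by
    by_cases hcase : ∃ᶠ l in atTop, u l ≤ 1 / 4
    · refine hcase.mono fun l h => le_trans h ?_
      linarith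
    · have hev : ∀ᶠ l in atTop, 1 / 4 < u l := by
        rw [Filter.not_frequently] at hcase
        refine hcase.mono fun l h => ?_
        push_neg at h
        exact h
      rw [eventually_atTop] at hev
      obtain ⟨L, hL⟩ := hev
      have ht : ∀ l, L ≤ l → (Q (l + 1) : ℝ) < 4 * Q l := by
        intro l hl
        have h1 := hL l hl
        have h2 : δ l ≤ 1 / (Q (l + 1) : ℝ) := delta_le α hα l
        have h3 : u l ≤ (Q l : ℝ) / Q (l + 1) := by
          simp only [hu]
          rw [div_eq_mul_one_div]
          exact mul_le_mul_of_nonneg_left h2 (le_of_lt (hQpos l))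
        have h4 : (1:ℝ) / 4 < (Q l : ℝ) / Q (l + 1) := lt_of_lt_of_le h1 h3
        rw [div_lt_div_iff₀ (by norm_num) (hQpos (l + 1))] at h4
        linarith
      have hwu : ∀ l, L + 2 ≤ l → u l ≤ (4 / 5) * w l := by
        intro l hl
        obtain ⟨m, rfl⟩ : ∃ m, l = m + 2 := ⟨l - 2, by omega⟩
        have hfib : Q (m + 1) + Q (m + 2) ≤ Q (m + 3) := rQ_fib α hα m
        have ht1 : (Q (m + 2) : ℝ) < 4 * Q (m + 1) := ht (m + 1) (by omega)
        have h5 : (5 / 4 : ℝ) * Q (m + 2) ≤ Q (m + 3) := by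
          have hc1 : (Q (m + 1) : ℝ) + Q (m + 2) ≤ Q (m + 3) := by exact_mod_cast hfib
          linarith
        have hδp := hδpos (m + 2)
        simp only [hu, hw]
        calc (Q (m + 2) : ℝ) * δ (m + 2) ≤ (4 / 5) * ((5 / 4 : ℝ) * Q (m + 2)) * δ (m + 2) := by
              apply mul_le_mul_of_nonneg_right _ (le_of_lt hδp)
              linarith
        _ ≤ (4 / 5) * (Q (m + 3) : ℝ) * δ (m + 2) := by
              apply mul_le_mul_of_nonneg_right _ (le_of_lt hδp)
              linarith
        _ = (4 / 5) * ((Q (m + 2 + 1) : ℝ) * δ (m + 2)) := by ring_nf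
      have hfreqw : ∃ᶠ l in atTop, w l < c + 1 / 20 :=
        Filter.frequently_lt_of_liminf_lt hcob_ge (by rw [← hc]; linarith)
      have hcomb := hfreqw.and_eventually (eventually_atTop.2 ⟨L + 2, hwu⟩)
      refine hcomb.mono ?_
      rintro l ⟨h1, h2⟩
      have : u l ≤ (4 / 5) * (c + 1 / 20) := le_trans h2 (by nlinarith [hw_nonneg l])
      refine le_trans this ?_
      rw [hs]
      linarith
  -- Part 3 : frequently large pair counts
  have hfreq : ∃ᶠ N in atTop,
      (fun N : ℕ => (pairCount x s N : ℝ) / N) N ∈ Set.Ici (1 / 200 : ℝ) := by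
    rw [Filter.frequently_atTop]
    intro M
    rw [Filter.frequently_atTop] at hkey
    obtain ⟨l, hlge, hul⟩ := hkey (max M 400)
    set q : ℕ := Q l with hq
    have hlq : l + 1 ≤ q := rQ_le_self α hα l
    have hq400 : 400 ≤ q := by omega
    have hqM : M ≤ q := by omega
    have hδp := hδpos l
    set N : ℕ := ⌊s / δ l⌋₊ with hN
    have hNle : (N : ℝ) ≤ s / δ l := Nat.floor_le (by positivity)
    have hNgt : s / δ l - 1 < N := Nat.sub_one_lt_floor _
    have hchain : (101 / 100 : ℝ) * q ≤ s / δ l := by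
      have h1 : (q : ℝ) * δ l ≤ s * (100 / 101) := hul
      rw [le_div_iff₀ hδp]
      nlinarith [hQpos l]
    have hq400' : (400:ℝ) ≤ (q:ℝ) := by exact_mod_cast hq400
    have hNq : (201 / 200 : ℝ) * q ≤ N := by linarith
    have hqN : q < N := by
      have : (q : ℝ) < N := by linarith
      exact_mod_cast this
    have hNnat : 0 < N := by omega
    have hNp : (0:ℝ) < N := by exact_mod_cast hNnat
    have hNM : M ≤ N := le_trans hqM (le_of_lt hqN)
    refine ⟨N, hNM, ?_⟩
    have hpair : 2 * (N - q) ≤ pairCount x s N := by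
      apply le_pairCount x s N q (rQ_one_le α hα l) hqN
      intro i hi1 hiN
      rw [← nid_neg, neg_sub, nid_x_sub α x hx (i + q) i (by omega)]
      have he : i + q - i = q := by omega
      rw [he]
      rw [le_div_iff₀ hNp]
      calc δ l * N ≤ δ l * (s / δ l) := by
            apply mul_le_mul_of_nonneg_left hNle (le_of_lt hδp)
      _ = s := by rw [mul_comm, div_mul_cancel₀ s (ne_of_gt hδp)]
    rw [Set.mem_Ici]
    show (1 / 200 : ℝ) ≤ (pairCount x s N : ℝ) / N
    have hcast : ((2 * (N - q) : ℕ) : ℝ) = 2 * ((N : ℝ) - q) := by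
      push_cast [Nat.cast_sub (le_of_lt hqN)]
      ring
    calc (1 / 200 : ℝ) ≤ 2 * ((N : ℝ) - q) / N := by
          rw [le_div_iff₀ hNp]
          nlinarith
    _ ≤ (pairCount x s N : ℝ) / N := by
          gcongr
          rw [← hcast]
          exact_mod_cast hpair
  have hge : (1 / 200 : ℝ) ≤ f s := by
    have := isClosed_Ici.mem_of_frequently_of_tendsto hfreq (hcorr s hs_nonneg)
    simpa using this
  rw [hfs0] at hge
  norm_num at hge
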